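/- If f₁ : [0,1] → ℝ is continuous and ∫₀¹ x f₁(x) dx = 1, then ∫₀¹ f₃(t) dt = 1, where f₃(t) = f₁(t) − (1/t²) ∫₀ᵗ x f₁(x) dx for t ∈ (0,1]; in other words, σ = 0 always belongs to the set Σ = {σ ∈ ℂ : ∫₀¹ t^σ f₃(t) dt = 1}. -/

import Mathlib

open MeasureTheory Set Filter intervalIntegral
open scoped Topology

theorem stmt7 (f₁ : ℝ → ℝ) (hf₁ : ContinuousOn f₁ (Set.Icc 0 1))
    (hnorm : ∫ x in (0:ℝ)..1, x * f₁ x = 1) :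
    ∫ t in (0:ℝ)..1, (f₁ t - (1 / t ^ 2) * ∫ x in (0:ℝ)..t, x * f₁ x) = 1 := by
  set F : ℝ → ℝ := fun t => ∫ x in (0:ℝ)..t, x * f₁ x with hFdef
  -- a bound for f₁ on [0,1]
  obtain ⟨M, hM⟩ : ∃ M, ∀ x ∈ Set.Icc (0:ℝ) 1, ‖f₁ x‖ ≤ M :=
    isCompact_Icc.exists_bound_of_continuousOn hf₁
  have hM0 : 0 ≤ M := le_trans (norm_nonneg _) (hM 0 ⟨le_refl _, zero_le_one⟩)
  have hxf1cont : ContinuousOn (fun x => x * f₁ x) (Set.Icc 0 1) :=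
    continuousOn_id.mul hf₁
  have hxf1int : ∀ t ∈ Set.Icc (0:ℝ) 1, IntervalIntegrable (fun x => x * f₁ x) volume 0 t := by
    intro t ht
    apply (hxf1cont.mono _).intervalIntegrable
    rw [Set.uIcc_of_le ht.1]
    exact Set.Icc_subset_Icc le_rfl ht.2
  -- F is continuous on [0,1]
  have hFint01 : IntervalIntegrable (fun x => x * f₁ x) volume 0 1 :=
    hxf1int 1 (Set.right_mem_Icc.mpr zero_le_one)
  have hcontF : ContinuousOn F (Set.Icc 0 1) := by
    have := intervalIntegral.continuousOn_primitive_interval' hFint01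
      (a := 0) (by simp)
    simpa [Set.uIcc_of_le (zero_le_one (α := ℝ))] using this
  -- bound for F
  have hFbound : ∀ t ∈ Set.Icc (0:ℝ) 1, ‖F t‖ ≤ M * t ^ 2 := by
    intro t ht
    have h1 : ∀ x ∈ Set.uIoc (0:ℝ) t, ‖x * f₁ x‖ ≤ t * M := by
      intro x hx
      rw [Set.uIoc_of_le ht.1] at hx
      have hx1 : x ∈ Set.Icc (0:ℝ) 1 := ⟨hx.1.le, hx.2.trans ht.2⟩
      rw [norm_mul]
      have hxt : ‖x‖ ≤ t := by rw [Real.norm_eq_abs, abs_of_nonneg hx.1.le]; exact hx.2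
      exact mul_le_mul hxt (hM x hx1) (norm_nonneg _) ht.1
    have h2 := intervalIntegral.norm_integral_le_of_norm_le_const h1
    have h3 : t * M * |t - 0| = M * t ^ 2 := by
      rw [sub_zero, abs_of_nonneg ht.1]; ring
    rw [h3] at h2
    exact h2
  -- the primitive G
  set G : ℝ → ℝ := fun t => F t / t with hGdef
  have hG0 : G 0 = 0 := by simp [hGdef, hFdef]
  have hG1 : G 1 = 1 := by simp [hGdef, hFdef, hnorm]
  -- continuity of G on [0,1]
  have hcontG : ContinuousOn G (Set.Icc 0 1) := by
    intro t ht
    rcases eq_or_lt_of_le ht.1 with h0 | h0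
    · -- continuity at 0 via squeeze
      subst h0
      rw [ContinuousWithinAt, hG0]
      apply squeeze_zero_norm' (a := fun t => M * t)
      · filter_upwards [self_mem_nhdsWithin] with x hx
        rcases eq_or_lt_of_le (hx.1 : (0:ℝ) ≤ x) with hx0 | hx0
        · simp [hGdef, ← hx0, hFdef]
        · have : ‖G x‖ = ‖F x‖ / x := by
            rw [hGdef]
            simp only [norm_div, Real.norm_eq_abs, abs_of_pos hx0]
          rw [this, div_le_iff₀ hx0]
          calc ‖F x‖ ≤ M * x ^ 2 := hFbound x hx
            _ = M * x * x := by ring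
      · have : Tendsto (fun t : ℝ => M * t) (𝓝 0) (𝓝 (M * 0)) :=
          (continuous_const.mul continuous_id).tendsto 0
        rw [mul_zero] at this
        exact this.mono_left nhdsWithin_le_nhds
    · exact ((hcontF t ht).div continuousWithinAt_id (ne_of_gt h0))
  -- the derivative of G on (0,1)
  have hderiv : ∀ t ∈ Set.Ioo (0:ℝ) 1, HasDerivAt G (f₁ t - (1 / t ^ 2) * F t) t := by
    intro t ht
    have htne : t ≠ 0 := ne_of_gt ht.1
    have hFderiv : HasDerivAt F (t * f₁ t) t := by
      apply intervalIntegral.integral_hasDerivAt_right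
        (hxf1int t ⟨ht.1.le, ht.2.le⟩)
      · exact ⟨Set.Icc 0 1, Icc_mem_nhds ht.1 ht.2, hxf1cont.aestronglyMeasurable measurableSet_Icc⟩
      · exact hxf1cont.continuousAt (Icc_mem_nhds ht.1 ht.2)
    have : HasDerivAt G ((t * f₁ t * t - F t * 1) / t ^ 2) t := hFderiv.div (hasDerivAt_id t) htne
    convert this using 1
    field_simp
  -- integrability of the integrand
  have hint : IntervalIntegrable (fun t => f₁ t - (1 / t ^ 2) * F t) volume 0 1 := by
    apply IntervalIntegrable.sub
    · apply ContinuousOn.intervalIntegrable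
      rw [Set.uIcc_of_le zero_le_one]; exact hf₁
    · rw [intervalIntegrable_iff_integrableOn_Ioc_of_le zero_le_one]
      have hmeas : AEStronglyMeasurable (fun t => (1 / t ^ 2) * F t)
          (volume.restrict (Set.Ioc (0:ℝ) 1)) := by
        apply ContinuousOn.aestronglyMeasurable _ measurableSet_Ioc
        apply ContinuousOn.mul
        · apply ContinuousOn.div continuousOn_const (continuousOn_pow 2)
          intro x hx
          exact pow_ne_zero 2 (ne_of_gt hx.1)
        · exact hcontF.mono Set.Ioc_subset_Icc_self
      apply Integrable.mono' (g := fun _ : ℝ => M)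
        (integrable_const M) hmeas
      filter_upwards [ae_restrict_mem measurableSet_Ioc] with x hx
      have hx2 : (0:ℝ) < x ^ 2 := pow_pos hx.1 2
      rw [norm_mul]
      have h1 : ‖(1:ℝ) / x ^ 2‖ = 1 / x ^ 2 := by
        rw [Real.norm_eq_abs, abs_of_pos (by positivity)]
      rw [h1]
      calc 1 / x ^ 2 * ‖F x‖ ≤ 1 / x ^ 2 * (M * x ^ 2) := by
            apply mul_le_mul_of_nonneg_left (hFbound x ⟨hx.1.le, hx.2⟩) (by positivity)
        _ = M := by field_simp [hx.1.ne']
  -- apply FTC-2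
  have key := intervalIntegral.integral_eq_sub_of_hasDeriv_right_of_le zero_le_one hcontG
    (fun t ht => (hderiv t ht).hasDerivWithinAt) hint
  rw [key, hG1, hG0, sub_zero]
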